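/- Let L = (α_1, …, α_n) be distinct elements of F_{q^ℓ} and f ∈ F_{q^ℓ}[x] a squarefree polynomial not vanishing at any α_i. Then the classical Goppa codes satisfy Γ_q(L, f^{q−1}) = Γ_q(L, f^q), where Γ_q(L,g) := {c ∈ F_q^n : Σ_i c_i/(x−α_i) ≡ 0 mod g}. -/

import Mathlib

open Polynomial Finset

lemma goppa_core {A : Type*} [Field A] (p s : ℕ) [hp : Fact p.Prime] [CharP A p]
    (hs : 1 ≤ s) {n : ℕ} (b d : Fin n → A) (hb : ∀ j, b j ≠ 0)
    (hd : ∀ i, d i ^ p ^ s = d i)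
    (h : X ^ (p ^ s - 1) ∣
      ∑ i : Fin n, C (d i) * ∏ j ∈ Finset.univ.erase i, (X + C (b j))) :
    X ^ (p ^ s) ∣ ∑ i : Fin n, C (d i) * ∏ j ∈ Finset.univ.erase i, (X + C (b j)) := by
  haveI : ExpChar A p := ExpChar.prime hp.out
  set q := p ^ s with hqdef
  have hq2 : 2 ≤ q := Nat.one_lt_pow (by omega) hp.out.one_lt
  obtain ⟨m, hm⟩ : ∃ m, q = m + 1 := ⟨q - 1, by omega⟩
  have hm1 : 1 ≤ m := by omega
  set T := ∑ i : Fin n, C (d i) * ∏ j ∈ Finset.univ.erase i, (X + C (b j)) with hT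
  rw [X_pow_dvd_iff] at h ⊢
  have hq1m : q - 1 = m := by omega
  rw [hq1m] at h
  -- key computation : T.coeff m = 0
  set E := ∏ j : Fin n, (X + C (b j)) with hE
  have key : (T * E ^ m).coeff m = T.coeff m * (E ^ m).coeff 0 := by
    rw [coeff_mul]
    refine Finset.sum_eq_single (m, 0) ?_ ?_
    · rintro ⟨a, b'⟩ hab hne
      rw [Finset.HasAntidiagonal.mem_antidiagonal] at hab
      have ha : a < m := by
        rcases Nat.lt_or_ge a m with h' | h'
        · exact h'
        · exact absurd (by simp at hab ⊢; omega) hne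
      rw [h a ha, zero_mul]
    · intro hmem
      exact absurd (Finset.HasAntidiagonal.mem_antidiagonal.2 (by simp)) hmem
  have expand1 : T * E ^ m = ∑ i : Fin n, C (d i) *
      ((X + C (b i)) ^ m * (∏ j ∈ Finset.univ.erase i, (X + C (b j))) ^ q) := by
    rw [hT, Finset.sum_mul]
    refine Finset.sum_congr rfl fun i _ => ?_
    have hEi : E = (X + C (b i)) * ∏ j ∈ Finset.univ.erase i, (X + C (b j)) :=
      (Finset.mul_prod_erase _ _ (Finset.mem_univ i)).symm
    rw [mul_assoc, hEi, hm, mul_pow]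
    ring
  have coeff_i : ∀ i : Fin n,
      ((X + C (b i)) ^ m * (∏ j ∈ Finset.univ.erase i, (X + C (b j))) ^ q).coeff m
        = ∏ j ∈ Finset.univ.erase i, (b j) ^ q := by
    intro i
    have hq0 : 0 < q := by omega
    have hRe : (∏ j ∈ Finset.univ.erase i, (X + C (b j))) ^ q
        = expand A q (∏ j ∈ Finset.univ.erase i, (X + C (b j ^ q))) := by
      rw [map_prod, ← Finset.prod_pow]
      refine Finset.prod_congr rfl fun j _ => ?_
      rw [map_add, expand_X, expand_C, hqdef, add_pow_char_pow, ← C_pow]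
    rw [hRe, coeff_mul]
    refine (Finset.sum_eq_single (m, 0) ?_ ?_).trans ?_
    · rintro ⟨a, b'⟩ hab hne
      rw [Finset.HasAntidiagonal.mem_antidiagonal] at hab
      have hb' : b' ≠ 0 := by
        rintro rfl
        exact hne (by simp at hab ⊢; omega)
      have hnd : ¬ q ∣ b' := by
        intro hdvd
        exact hb' (Nat.eq_zero_of_dvd_of_lt hdvd (by omega))
      rw [coeff_expand hq0, if_neg hnd, mul_zero]
    · intro hmem
      exact absurd (Finset.HasAntidiagonal.mem_antidiagonal.2 (by simp)) hmem
    · rw [coeff_expand hq0, if_pos (dvd_zero q), Nat.zero_div]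
      have h1 : ((X + C (b i)) ^ m).coeff m = 1 := by
        have hdeg : ((X + C (b i)) ^ m).natDegree = m := by
          rw [natDegree_pow, natDegree_X_add_C, mul_one]
        have h2 := ((monic_X_add_C (b i)).pow m).coeff_natDegree
        rwa [hdeg] at h2
      rw [h1, one_mul, coeff_zero_eq_eval_zero, eval_prod]
      simp
  have key2 : (T * E ^ m).coeff m = ∑ i : Fin n, d i * ∏ j ∈ Finset.univ.erase i, (b j) ^ q := by
    rw [expand1, finset_sum_coeff]
    refine Finset.sum_congr rfl fun i _ => ?_
    rw [coeff_C_mul, coeff_i]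
  have frob : ∑ i : Fin n, d i * ∏ j ∈ Finset.univ.erase i, (b j) ^ q
      = (∑ i : Fin n, d i * ∏ j ∈ Finset.univ.erase i, b j) ^ q := by
    rw [hqdef, sum_pow_char_pow]
    refine Finset.sum_congr rfl fun i _ => ?_
    rw [mul_pow, ← hqdef, hd i, hqdef, ← Finset.prod_pow]
  have hT0 : (∑ i : Fin n, d i * ∏ j ∈ Finset.univ.erase i, b j) = T.coeff 0 := by
    rw [hT, finset_sum_coeff]
    refine Finset.sum_congr rfl fun i _ => ?_
    rw [coeff_C_mul, coeff_zero_eq_eval_zero, eval_prod]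
    simp
  have hT00 : T.coeff 0 = 0 := h 0 (by omega)
  have hEm0 : (E ^ m).coeff 0 = (∏ j : Fin n, b j) ^ m := by
    rw [coeff_zero_eq_eval_zero, eval_pow, eval_prod]
    simp
  have hcm : T.coeff m = 0 := by
    have h0 : T.coeff m * (∏ j : Fin n, b j) ^ m = 0 := by
      rw [← hEm0, ← key, key2, frob, hT0, hT00, zero_pow (by omega)]
    rcases mul_eq_zero.1 h0 with h' | h'
    · exact h'
    · exact absurd h' (pow_ne_zero _ (Finset.prod_ne_zero_iff.2 fun j _ => hb j))
  intro e he
  rcases Nat.lt_or_ge e m with h' | h'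
  · exact h e h'
  · have : e = m := by omega
    rw [this, hcm]

theorem goppa_code_f_pow_q_sub_one_eq_f_pow_q
    {K L : Type*} [Field K] [Field L] [Algebra K L] [Fintype K] [Fintype L]
    {n : ℕ} (α : Fin n → L) (hα : Function.Injective α)
    (f : Polynomial L) (hf : Squarefree f) (hfα : ∀ i : Fin n, f.eval (α i) ≠ 0) :
    {c : Fin n → K |
        f ^ (Fintype.card K - 1) ∣
          ∑ i : Fin n, Polynomial.C (algebraMap K L (c i)) *
            ∏ j ∈ Finset.univ.erase i, (Polynomial.X - Polynomial.C (α j))}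
      = {c : Fin n → K |
          f ^ (Fintype.card K) ∣
            ∑ i : Fin n, Polynomial.C (algebraMap K L (c i)) *
              ∏ j ∈ Finset.univ.erase i, (Polynomial.X - Polynomial.C (α j))} := by
  classical
  ext c
  simp only [Set.mem_setOf_eq]
  constructor
  case mpr => exact fun h => dvd_trans (pow_dvd_pow f (Nat.sub_le _ 1)) h
  intro hdvd
  set q := Fintype.card K with hq
  haveI : CharP K (ringChar K) := ringChar.charP K
  obtain ⟨s, hp, hcard⟩ := FiniteField.card K (ringChar K)
  set p := ringChar K with hpdef
  haveI : Fact p.Prime := ⟨hp⟩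
  haveI hLp : CharP L p := charP_of_injective_ringHom (algebraMap K L).injective p
  set A := AlgebraicClosure L with hA
  set ψ : L →+* A := algebraMap L A with hψ
  haveI : CharP A p := charP_of_injective_ringHom ψ.injective p
  set S : L[X] := ∑ i : Fin n, C (algebraMap K L (c i)) *
    ∏ j ∈ Finset.univ.erase i, (X - C (α j)) with hS
  rw [← map_dvd_map' ψ, Polynomial.map_pow]
  set Sb : A[X] := S.map ψ with hSb
  set fb : A[X] := f.map ψ with hfb
  have hfsep : f.Separable := (PerfectField.separable_iff_squarefree).2 hf
  have hf0 : f ≠ 0 := hf.ne_zero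
  have hfb0 : fb ≠ 0 := by
    rw [hfb]
    exact Polynomial.map_ne_zero hf0
  have hfbsep : fb.Separable := hfsep.map
  have hnodup : fb.roots.Nodup := Polynomial.nodup_roots hfbsep
  have hSbform : Sb = ∑ i : Fin n, C (ψ (algebraMap K L (c i))) *
      ∏ j ∈ Finset.univ.erase i, (X - C (ψ (α j))) := by
    rw [hSb, hS, Polynomial.map_sum]
    refine Finset.sum_congr rfl fun i _ => ?_
    rw [Polynomial.map_mul, map_C, Polynomial.map_prod]
    congr 1
    exact Finset.prod_congr rfl fun j _ => by rw [Polynomial.map_sub, map_X, map_C]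
  -- each root gives divisibility
  have hroot : ∀ β ∈ fb.roots.toFinset, (X - C β) ^ q ∣ Sb := by
    intro β hβm
    have hβr : β ∈ fb.roots := Multiset.mem_toFinset.1 hβm
    have hβ : fb.eval β = 0 := (mem_roots hfb0).1 hβr
    have hbne : ∀ j : Fin n, β - ψ (α j) ≠ 0 := by
      intro j hzero
      have hβe : β = ψ (α j) := by rwa [sub_eq_zero] at hzero
      apply hfα j
      have heval : fb.eval (ψ (α j)) = ψ (f.eval (α j)) := by
        rw [hfb, eval_map, eval₂_at_apply]
      rw [hβe, heval] at hβ
      exact (map_eq_zero_iff ψ ψ.injective).1 hβ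
    set T : A[X] := Sb.comp (X + C β) with hTd
    have hTform : T = ∑ i : Fin n, C (ψ (algebraMap K L (c i))) *
        ∏ j ∈ Finset.univ.erase i, (X + C (β - ψ (α j))) := by
      rw [hTd, hSbform, Polynomial.sum_comp]
      refine Finset.sum_congr rfl fun i _ => ?_
      rw [mul_comp, C_comp, Polynomial.prod_comp]
      congr 1
      refine Finset.prod_congr rfl fun j _ => ?_
      rw [sub_comp, X_comp, C_comp, C_sub]
      ring
    have h2 : fb ^ (q - 1) ∣ Sb := by
      have h3 := (map_dvd_map' ψ).2 hdvd
      rwa [Polynomial.map_pow] at h3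
    have h1 : (X - C β) ^ (q - 1) ∣ Sb :=
      dvd_trans (pow_dvd_pow_of_dvd (dvd_iff_isRoot.2 hβ) _) h2
    have hXT : X ^ (q - 1) ∣ T := by
      obtain ⟨u, hu⟩ := h1
      refine ⟨u.comp (X + C β), ?_⟩
      rw [hTd, hu, mul_comp, pow_comp, sub_comp, X_comp, C_comp, add_sub_cancel_right]
    have hd : ∀ i : Fin n, (ψ (algebraMap K L (c i))) ^ p ^ (s : ℕ)
        = ψ (algebraMap K L (c i)) := by
      intro i
      rw [← map_pow, ← map_pow, ← hcard, FiniteField.pow_card]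
    have hXT' : X ^ q ∣ T := by
      rw [hTform] at hXT ⊢
      rw [hq, hcard] at hXT ⊢
      exact goppa_core p (s : ℕ) s.property _ _ hbne hd hXT
    obtain ⟨v, hv⟩ := hXT'
    have hback : T.comp (X - C β) = Sb := by
      rw [hTd, comp_assoc, add_comp, X_comp, C_comp, sub_add_cancel, comp_X]
    refine ⟨v.comp (X - C β), ?_⟩
    rw [← hback, hv, mul_comp, pow_comp, X_comp]
  -- assemble
  have hsplit : fb.Splits := IsAlgClosed.splits fb
  have heq := hsplit.eq_prod_roots
  have hval : fb.roots.toFinset.val = fb.roots := by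
    rw [Multiset.toFinset_val, hnodup.dedup]
  have hPd : ((fb.roots.map fun a => X - C a).prod) ^ q ∣ Sb := by
    have hfin : (fb.roots.map fun a => X - C a).prod
        = ∏ β ∈ fb.roots.toFinset, (X - C β) := by
      rw [Finset.prod_eq_multiset_prod, hval]
    rw [hfin, ← Finset.prod_pow]
    refine Finset.prod_dvd_of_coprime ?_ fun β hβ => hroot β hβ
    intro β _ γ _ hne
    exact (pairwise_coprime_X_sub_C Function.injective_id hne).pow
  rw [heq, mul_pow]
  have hunit : IsUnit ((C fb.leadingCoeff) ^ q) :=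
    (isUnit_C.2 (isUnit_iff_ne_zero.2 (leadingCoeff_ne_zero.2 hfb0))).pow q
  exact hunit.mul_left_dvd.2 hPd
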